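/- arXiv:1204.1366 — 2 statements merged into one kernel-verified Lean document; each statement's English description precedes it below -/
import Mathlib

section
/- Let $e_1,\dots,e_n$ be random unit vectors in $\mathbb{R}^3$ with $\mathbb{E}[\langle e_i,e_j\rangle] = -1/(n-1)$ for all $i\ne j$ ($n\ge 2$), and let $v_k = \sum_{i=1}^k e_i$, $c = \frac1n\sum_{k=1}^n v_k$. Then the expected squared radius of gyration $\mathbb{E}\left[\frac1n\sum_{k=1}^n \|v_k - c\|^2\right]$ equals $\frac{n+1}{12}$. -/
open MeasureTheory
open scoped InnerProductSpace


lemma ring_sum_ite_le {M : Type*} [AddCommMonoid M] (g : ℕ → M) {k n : ℕ} (hk : k ≤ n) :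
    ∑ i ∈ Finset.Icc 1 n, (if i ≤ k then g i else 0) = ∑ i ∈ Finset.Icc 1 k, g i := by
  have h1 : ∑ i ∈ Finset.Icc 1 n, (if i ≤ k then g i else 0)
      = ∑ i ∈ Finset.Icc 1 k, (if i ≤ k then g i else 0) := by
    symm
    apply Finset.sum_subset (Finset.Icc_subset_Icc_right hk)
    intro i hi hni
    rw [if_neg]
    intro h
    exact hni (Finset.mem_Icc.mpr ⟨(Finset.mem_Icc.mp hi).1, h⟩)
  rw [h1]
  exact Finset.sum_congr rfl fun i hi => if_pos (Finset.mem_Icc.mp hi).2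

lemma ring_sum_Icc_cast (n : ℕ) : ∑ i ∈ Finset.Icc 1 n, (i:ℝ) = n*(n+1)/2 := by
  induction n with
  | zero => simp
  | succ m ih =>
    rw [Finset.sum_Icc_succ_top (by omega), ih]
    push_cast
    ring

lemma ring_sum_Icc_sq_cast (n : ℕ) : ∑ i ∈ Finset.Icc 1 n, (i:ℝ)^2 = n*(n+1)*(2*n+1)/6 := by
  induction n with
  | zero => simp
  | succ m ih =>
    rw [Finset.sum_Icc_succ_top (by omega), ih]
    push_cast
    ring

noncomputable def aCoef (n k i : ℕ) : ℝ := (if i ≤ k then 1 else 0) - ((n:ℝ) + 1 - i)/n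

lemma aCoef_sum (n k : ℕ) (hkn : k ≤ n) (hn0 : (n:ℝ) ≠ 0) :
    ∑ i ∈ Finset.Icc 1 n, aCoef n k i = (k:ℝ) - ((n:ℝ)+1)/2 := by
  unfold aCoef
  rw [Finset.sum_sub_distrib, ring_sum_ite_le (fun _ => (1:ℝ)) hkn]
  have h2 : ∑ i ∈ Finset.Icc 1 n, ((n:ℝ)+1-i)/n = ((n:ℝ)+1)/2 := by
    rw [← Finset.sum_div, Finset.sum_sub_distrib, Finset.sum_const, Nat.card_Icc,
      ring_sum_Icc_cast]
    simp only [Nat.add_sub_cancel, nsmul_eq_mul]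
    field_simp
    ring
  rw [h2]
  simp [Nat.card_Icc]

lemma aCoef_sq_sum (n k : ℕ) (hkn : k ≤ n) (hn0 : (n:ℝ) ≠ 0) :
    ∑ i ∈ Finset.Icc 1 n, (aCoef n k i)^2
      = (k:ℝ) - 2*k*((n:ℝ)+1)/n + k*(k+1)/n + ((n:ℝ)+1)*(2*(n:ℝ)+1)/(6*n) := by
  have expand : ∀ i, (aCoef n k i)^2 = ((if i ≤ k then (1:ℝ) else 0)
      - (2/(n:ℝ)) * (if i ≤ k then ((n:ℝ)+1-i) else 0)) + (((n:ℝ)+1-i)/n)^2 := by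
    intro i
    unfold aCoef
    split_ifs <;> field_simp <;> try ring
  rw [Finset.sum_congr rfl fun i _ => expand i, Finset.sum_add_distrib,
    Finset.sum_sub_distrib, ring_sum_ite_le (fun _ => (1:ℝ)) hkn, ← Finset.mul_sum,
    ring_sum_ite_le (fun i => ((n:ℝ)+1-(i:ℝ))) hkn]
  have p1 : ∑ _i ∈ Finset.Icc 1 k, (1:ℝ) = k := by simp [Nat.card_Icc]
  have p2 : ∑ i ∈ Finset.Icc 1 k, ((n:ℝ)+1-(i:ℝ)) = k*((n:ℝ)+1) - k*(k+1)/2 := by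
    rw [Finset.sum_sub_distrib, Finset.sum_const, Nat.card_Icc, ring_sum_Icc_cast]
    simp only [Nat.add_sub_cancel, nsmul_eq_mul]
    try ring
  have p3 : ∑ i ∈ Finset.Icc 1 n, (((n:ℝ)+1-i)/n)^2 = ((n:ℝ)+1)*(2*(n:ℝ)+1)/(6*n) := by
    have h : ∀ i : ℕ, (((n:ℝ)+1-i)/n)^2
        = ((((n:ℝ)+1)^2 - 2*((n:ℝ)+1)*i) + (i:ℝ)^2)/n^2 := by
      intro i
      field_simp
      ring
    rw [Finset.sum_congr rfl fun i _ => h i, ← Finset.sum_div, Finset.sum_add_distrib,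
      Finset.sum_sub_distrib, Finset.sum_const, Nat.card_Icc, ← Finset.mul_sum,
      ring_sum_Icc_cast, ring_sum_Icc_sq_cast]
    simp only [Nat.add_sub_cancel, nsmul_eq_mul]
    field_simp
    ring
  rw [p1, p2, p3]
  field_simp
  ring


/-- For a random ideal ring of length `n ≥ 2` with vertices `v k = e 1 + ⋯ + e k` and
center of mass `c`, the expected squared radius of gyration is `(n+1)/12`. -/
theorem expected_radius_of_gyration_ring (n : ℕ) (hn : 2 ≤ n)
    {Ω : Type*} [MeasurableSpace Ω] (μ : Measure Ω) [IsProbabilityMeasure μ]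
    (e : ℕ → Ω → EuclideanSpace ℝ (Fin 3))
    (hunit : ∀ i ∈ Finset.Icc 1 n, ∀ ω, ‖e i ω‖ = 1)
    (hint : ∀ i ∈ Finset.Icc 1 n, ∀ i' ∈ Finset.Icc 1 n,
      Integrable (fun ω => ⟪e i ω, e i' ω⟫_ℝ) μ)
    (hexp : ∀ i ∈ Finset.Icc 1 n, ∀ i' ∈ Finset.Icc 1 n, i ≠ i' →
      ∫ ω, ⟪e i ω, e i' ω⟫_ℝ ∂μ = -1 / ((n : ℝ) - 1)) :
    ∫ ω, (1 / (n : ℝ)) * ∑ k ∈ Finset.Icc 1 n,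
        ‖(∑ i ∈ Finset.Icc 1 k, e i ω)
          - (n : ℝ)⁻¹ • ∑ k' ∈ Finset.Icc 1 n, ∑ i ∈ Finset.Icc 1 k', e i ω‖ ^ 2 ∂μ
      = ((n : ℝ) + 1) / 12 := by
  have hn0 : (n:ℝ) ≠ 0 := Nat.cast_ne_zero.mpr (by omega)
  have h2n : (2:ℝ) ≤ (n:ℝ) := by exact_mod_cast hn
  have hn1 : (n:ℝ) - 1 ≠ 0 := by
    intro h
    have : (n:ℝ) = 1 := by linarith
    linarith
  -- Step 1: vertices minus centroid as linear combination of the edges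
  have hv : ∀ ω : Ω, ∀ k ∈ Finset.Icc 1 n,
      (∑ i ∈ Finset.Icc 1 k, e i ω)
        - (n:ℝ)⁻¹ • ∑ k' ∈ Finset.Icc 1 n, ∑ i ∈ Finset.Icc 1 k', e i ω
      = ∑ i ∈ Finset.Icc 1 n, aCoef n k i • e i ω := by
    intro ω k hk
    obtain ⟨hk1, hkn⟩ := Finset.mem_Icc.mp hk
    have h1 : ∀ m ≤ n, ∑ i ∈ Finset.Icc 1 m, e i ω
        = ∑ i ∈ Finset.Icc 1 n, (if i ≤ m then (1:ℝ) else 0) • e i ω := by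
      intro m hm
      have hite : ∀ i, (if i ≤ m then (1:ℝ) else 0) • e i ω
          = (if i ≤ m then e i ω else 0) := by
        intro i; split <;> simp
      rw [Finset.sum_congr rfl fun i _ => hite i, ring_sum_ite_le (fun i => e i ω) hm]
    have hcount : ∀ i ∈ Finset.Icc 1 n,
        ∑ k' ∈ Finset.Icc 1 n, (if i ≤ k' then (1:ℝ) else 0) = (n:ℝ) + 1 - i := by
      intro i hi
      obtain ⟨hi1, hin⟩ := Finset.mem_Icc.mp hi
      have hflip : ∀ k', (if i ≤ k' then (1:ℝ) else 0)
          = 1 - (if k' ≤ i - 1 then (1:ℝ) else 0) := by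
        intro k'
        rcases le_or_gt i k' with h | h
        · rw [if_pos h, if_neg (by omega)]; ring
        · rw [if_neg (by omega), if_pos (by omega)]; ring
      rw [Finset.sum_congr rfl fun k' _ => hflip k', Finset.sum_sub_distrib,
        Finset.sum_const, ring_sum_ite_le (fun _ => (1:ℝ)) (show i - 1 ≤ n by omega),
        Finset.sum_const, Nat.card_Icc, Nat.card_Icc]
      simp only [Nat.add_sub_cancel, nsmul_eq_mul, mul_one]
      push_cast [Nat.cast_sub hi1]
      ring
    have h2 : ∑ k' ∈ Finset.Icc 1 n, ∑ i ∈ Finset.Icc 1 k', e i ω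
        = ∑ i ∈ Finset.Icc 1 n, ((n:ℝ) + 1 - i) • e i ω := by
      calc ∑ k' ∈ Finset.Icc 1 n, ∑ i ∈ Finset.Icc 1 k', e i ω
          = ∑ k' ∈ Finset.Icc 1 n, ∑ i ∈ Finset.Icc 1 n,
              (if i ≤ k' then (1:ℝ) else 0) • e i ω :=
            Finset.sum_congr rfl fun k' hk' => h1 k' (Finset.mem_Icc.mp hk').2
        _ = ∑ i ∈ Finset.Icc 1 n, ∑ k' ∈ Finset.Icc 1 n,
              (if i ≤ k' then (1:ℝ) else 0) • e i ω := Finset.sum_comm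
        _ = ∑ i ∈ Finset.Icc 1 n,
              (∑ k' ∈ Finset.Icc 1 n, if i ≤ k' then (1:ℝ) else 0) • e i ω := by
            exact Finset.sum_congr rfl fun i _ => (Finset.sum_smul).symm
        _ = ∑ i ∈ Finset.Icc 1 n, ((n:ℝ) + 1 - i) • e i ω :=
            Finset.sum_congr rfl fun i hi => by rw [hcount i hi]
    rw [h1 k hkn, h2, Finset.smul_sum, ← Finset.sum_sub_distrib]
    refine Finset.sum_congr rfl fun i _ => ?_
    rw [smul_smul, ← sub_smul]
    unfold aCoef
    congr 1
    rw [div_eq_inv_mul]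
  -- Step 2: squared norm as double sum of inner products
  have hnorm : ∀ (ω : Ω) (k : ℕ), ‖∑ i ∈ Finset.Icc 1 n, aCoef n k i • e i ω‖^2
      = ∑ i ∈ Finset.Icc 1 n, ∑ j ∈ Finset.Icc 1 n,
          aCoef n k i * aCoef n k j * ⟪e i ω, e j ω⟫_ℝ := by
    intro ω k
    rw [← real_inner_self_eq_norm_sq, sum_inner]
    refine Finset.sum_congr rfl fun i _ => ?_
    rw [inner_sum]
    refine Finset.sum_congr rfl fun j _ => ?_
    rw [real_inner_smul_left, real_inner_smul_right]
    ring
  -- Step 3: swap sums lemma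
  have swap : ∀ f : ℕ → ℕ → ℝ,
      ∑ i ∈ Finset.Icc 1 n, ∑ j ∈ Finset.Icc 1 n,
          ((1/(n:ℝ)) * ∑ k ∈ Finset.Icc 1 n, aCoef n k i * aCoef n k j) * f i j
        = (1/(n:ℝ)) * ∑ k ∈ Finset.Icc 1 n, ∑ i ∈ Finset.Icc 1 n,
            ∑ j ∈ Finset.Icc 1 n, aCoef n k i * aCoef n k j * f i j := by
    intro f
    calc ∑ i ∈ Finset.Icc 1 n, ∑ j ∈ Finset.Icc 1 n,
          ((1/(n:ℝ)) * ∑ k ∈ Finset.Icc 1 n, aCoef n k i * aCoef n k j) * f i j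
        = ∑ i ∈ Finset.Icc 1 n, ∑ j ∈ Finset.Icc 1 n, ∑ k ∈ Finset.Icc 1 n,
            (1/(n:ℝ)) * (aCoef n k i * aCoef n k j * f i j) := by
          refine Finset.sum_congr rfl fun i _ => Finset.sum_congr rfl fun j _ => ?_
          rw [Finset.mul_sum, Finset.sum_mul]
          exact Finset.sum_congr rfl fun k _ => by ring
      _ = ∑ i ∈ Finset.Icc 1 n, ∑ k ∈ Finset.Icc 1 n, ∑ j ∈ Finset.Icc 1 n,
            (1/(n:ℝ)) * (aCoef n k i * aCoef n k j * f i j) :=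
          Finset.sum_congr rfl fun i _ => Finset.sum_comm
      _ = ∑ k ∈ Finset.Icc 1 n, ∑ i ∈ Finset.Icc 1 n, ∑ j ∈ Finset.Icc 1 n,
            (1/(n:ℝ)) * (aCoef n k i * aCoef n k j * f i j) := Finset.sum_comm
      _ = (1/(n:ℝ)) * ∑ k ∈ Finset.Icc 1 n, ∑ i ∈ Finset.Icc 1 n,
            ∑ j ∈ Finset.Icc 1 n, aCoef n k i * aCoef n k j * f i j := by
          rw [Finset.mul_sum]
          refine Finset.sum_congr rfl fun k _ => ?_
          rw [Finset.mul_sum]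
          exact Finset.sum_congr rfl fun i _ => (Finset.mul_sum _ _ _).symm
  -- Step 4: pointwise rewriting of the integrand
  have hfun : ∀ ω : Ω, (1 / (n : ℝ)) * ∑ k ∈ Finset.Icc 1 n,
        ‖(∑ i ∈ Finset.Icc 1 k, e i ω)
          - (n : ℝ)⁻¹ • ∑ k' ∈ Finset.Icc 1 n, ∑ i ∈ Finset.Icc 1 k', e i ω‖ ^ 2
      = ∑ i ∈ Finset.Icc 1 n, ∑ j ∈ Finset.Icc 1 n,
          ((1/(n:ℝ)) * ∑ k ∈ Finset.Icc 1 n, aCoef n k i * aCoef n k j)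
            * ⟪e i ω, e j ω⟫_ℝ := by
    intro ω
    rw [swap (fun i j => ⟪e i ω, e j ω⟫_ℝ)]
    congr 1
    refine Finset.sum_congr rfl fun k hk => ?_
    rw [hv ω k hk, hnorm ω k]
  -- Step 5: the value of each expectation
  have hEij : ∀ i ∈ Finset.Icc 1 n, ∀ j ∈ Finset.Icc 1 n,
      ∫ ω, ⟪e i ω, e j ω⟫_ℝ ∂μ = if i = j then (1:ℝ) else -1/((n:ℝ)-1) := by
    intro i hi j hj
    by_cases h : i = j
    · subst h
      rw [if_pos rfl]
      have hconst : (fun ω => ⟪e i ω, e i ω⟫_ℝ) = fun _ => (1:ℝ) := by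
        funext ω
        rw [real_inner_self_eq_norm_sq, hunit i hi ω, one_pow]
      rw [hconst]
      simp
    · rw [if_neg h]
      exact hexp i hi j hj h
  -- Step 6: integrate
  rw [integral_congr_ae (Filter.Eventually.of_forall hfun),
    integral_finset_sum _ (fun i hi =>
      integrable_finset_sum _ (fun j hj => ((hint i hi j hj).const_mul _)))]
  rw [Finset.sum_congr rfl fun i hi =>
    integral_finset_sum _ (fun j hj => ((hint i hi j hj).const_mul _))]
  rw [Finset.sum_congr rfl fun i (hi : i ∈ Finset.Icc 1 n) =>
    Finset.sum_congr rfl fun j (hj : j ∈ Finset.Icc 1 n) => by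
      rw [integral_const_mul, hEij i hi j hj]]
  -- Step 7: the scalar computation
  rw [swap (fun i j => if i = j then (1:ℝ) else -1/((n:ℝ)-1))]
  have per_k : ∀ k ∈ Finset.Icc 1 n,
      ∑ i ∈ Finset.Icc 1 n, ∑ j ∈ Finset.Icc 1 n,
          aCoef n k i * aCoef n k j * (if i = j then (1:ℝ) else -1/((n:ℝ)-1))
        = ((n:ℝ)+1)/12 := by
    intro k hk
    obtain ⟨hk1, hkn⟩ := Finset.mem_Icc.mp hk
    have hS := aCoef_sum n k hkn hn0
    have hQ := aCoef_sq_sum n k hkn hn0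
    have inner_j : ∀ i ∈ Finset.Icc 1 n,
        ∑ j ∈ Finset.Icc 1 n,
            aCoef n k i * aCoef n k j * (if i = j then (1:ℝ) else -1/((n:ℝ)-1))
          = aCoef n k i * (((k:ℝ) - ((n:ℝ)+1)/2) * (-1/((n:ℝ)-1)))
            + (aCoef n k i)^2 * ((n:ℝ)/((n:ℝ)-1)) := by
      intro i hi
      have split_w : ∀ j, aCoef n k i * aCoef n k j * (if i = j then (1:ℝ) else -1/((n:ℝ)-1))
          = aCoef n k i * (aCoef n k j * (-1/((n:ℝ)-1)))
            + (if i = j then aCoef n k i * aCoef n k j * ((n:ℝ)/((n:ℝ)-1)) else 0) := by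
        intro j
        split_ifs with h
        · subst h
          field_simp
          ring
        · ring
      rw [Finset.sum_congr rfl fun j _ => split_w j, Finset.sum_add_distrib,
        Finset.sum_ite_eq _ i _, if_pos hi, ← Finset.mul_sum, ← Finset.sum_mul, hS]
      ring
    rw [Finset.sum_congr rfl inner_j, Finset.sum_add_distrib, ← Finset.sum_mul,
      ← Finset.sum_mul, hS, hQ]
    field_simp
    ring
  rw [Finset.sum_congr rfl per_k, Finset.sum_const, Nat.card_Icc]
  simp only [Nat.add_sub_cancel, nsmul_eq_mul]
  field_simp
end

section
/- Let $e_1,\dots,e_n$ be random unit vectors in $\mathbb{R}^3$ with $\mathbb{E}[\langle e_i,e_j\rangle] = -1/(n-1)$ for all $i\ne j$, $n\ge 2$. Fix $m$ and $k$ with $m+k\le n$, let $v_j' = \sum_{i=m+1}^{m+j} e_i$ for $1 \le j \le k$ and $c' = \frac1k\sum_{j=1}^k v_j'$. Then $\mathbb{E}\left[\frac1k\sum_{j=1}^k \|v_j' - c'\|^2\right] = \frac{(k^2-1)(2n-k)}{12k(n-1)}$. -/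
open MeasureTheory
open scoped InnerProductSpace

private lemma sum_Icc_id' (k : ℕ) : ∑ j ∈ Finset.Icc 1 k, (j:ℝ) = k*(k+1)/2 := by
  induction k with
  | zero => simp
  | succ k ih =>
    rw [Finset.sum_Icc_succ_top (by omega)]
    push_cast [ih]; ring

private lemma sum_Icc_sq' (k : ℕ) : ∑ j ∈ Finset.Icc 1 k, (j:ℝ)^2 = k*(k+1)*(2*k+1)/6 := by
  induction k with
  | zero => simp
  | succ k ih =>
    rw [Finset.sum_Icc_succ_top (by omega)]
    push_cast [ih]; ring

private lemma sum_Icc_min' (k : ℕ) :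
    ∑ j ∈ Finset.Icc 1 k, ∑ j' ∈ Finset.Icc 1 k, ((min j j' : ℕ) : ℝ)
      = k*(k+1)*(2*k+1)/6 := by
  induction k with
  | zero => simp
  | succ k ih =>
    have h1 : ∀ j ∈ Finset.Icc 1 k, ((min j (k+1) : ℕ) : ℝ) = j := by
      intro j hj; simp at hj; rw [min_eq_left (by omega)]
    have h2 : ∀ j' ∈ Finset.Icc 1 k, ((min (k+1) j' : ℕ) : ℝ) = j' := by
      intro j hj; simp at hj; rw [min_eq_right (by omega)]
    rw [Finset.sum_Icc_succ_top (by omega)]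
    simp_rw [Finset.sum_Icc_succ_top (show 1 ≤ k+1 by omega)]
    rw [Finset.sum_add_distrib, Finset.sum_congr rfl h1,
      Finset.sum_congr rfl h2, ih, sum_Icc_id', min_self]
    push_cast; ring

private lemma gyration_expand {V : Type*} [NormedAddCommGroup V] [InnerProductSpace ℝ V]
    (k : ℕ) (hk : 1 ≤ k) (f : ℕ → V) :
    (1/(k:ℝ)) * ∑ j ∈ Finset.Icc 1 k, ‖f j - (k:ℝ)⁻¹ • ∑ j' ∈ Finset.Icc 1 k, f j'‖^2
      = (1/(k:ℝ)) * ∑ j ∈ Finset.Icc 1 k, ⟪f j, f j⟫_ℝ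
        - (1/(k:ℝ)^2) * ∑ j ∈ Finset.Icc 1 k, ∑ j' ∈ Finset.Icc 1 k, ⟪f j, f j'⟫_ℝ := by
  have hkR : ((k:ℝ)) ≠ 0 := Nat.cast_ne_zero.mpr (by omega)
  set T := ∑ j' ∈ Finset.Icc 1 k, f j' with hTdef
  have hT : ⟪T, T⟫_ℝ = ∑ j ∈ Finset.Icc 1 k, ∑ j' ∈ Finset.Icc 1 k, ⟪f j, f j'⟫_ℝ := by
    simp only [hTdef, sum_inner, inner_sum]
    exact Finset.sum_comm
  have expand : ∀ j, ‖f j - (k:ℝ)⁻¹ • T‖^2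
      = ⟪f j, f j⟫_ℝ - 2*(k:ℝ)⁻¹*⟪f j, T⟫_ℝ + ((k:ℝ)⁻¹)^2*⟪T,T⟫_ℝ := by
    intro j
    rw [norm_sub_sq_real, real_inner_smul_right, norm_smul, mul_pow,
      Real.norm_eq_abs, sq_abs]
    simp only [real_inner_self_eq_norm_sq]
    ring
  simp_rw [expand]
  rw [Finset.sum_add_distrib, Finset.sum_sub_distrib, ← Finset.mul_sum,
    ← sum_inner, ← hTdef, Finset.sum_const, Nat.card_Icc, hT]
  simp only [nsmul_eq_mul]
  have h1 : (k + 1 - 1 : ℕ) = k := by omega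
  rw [h1]
  field_simp
  ring

/-- The expected squared radius of gyration of a translated subsegment of `k` consecutive
edges (edges `m+1, …, m+k`) inside a random ideal ring of length `n` is
`(k²-1)(2n-k) / (12k(n-1))`. -/
theorem expected_subsegment_gyration (n k m : ℕ) (hn : 2 ≤ n) (hk : 1 ≤ k)
    (hmk : m + k ≤ n)
    {Ω : Type*} [MeasurableSpace Ω] (μ : Measure Ω) [IsProbabilityMeasure μ]
    (e : ℕ → Ω → EuclideanSpace ℝ (Fin 3))
    (hunit : ∀ i ∈ Finset.Icc 1 n, ∀ ω, ‖e i ω‖ = 1)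
    (hint : ∀ i ∈ Finset.Icc 1 n, ∀ i' ∈ Finset.Icc 1 n,
      Integrable (fun ω => ⟪e i ω, e i' ω⟫_ℝ) μ)
    (hexp : ∀ i ∈ Finset.Icc 1 n, ∀ i' ∈ Finset.Icc 1 n, i ≠ i' →
      ∫ ω, ⟪e i ω, e i' ω⟫_ℝ ∂μ = -1 / ((n : ℝ) - 1)) :
    ∫ ω, (1 / (k : ℝ)) * ∑ j ∈ Finset.Icc 1 k,
        ‖(∑ i ∈ Finset.Icc (m + 1) (m + j), e i ω)
          - (k : ℝ)⁻¹ • ∑ j' ∈ Finset.Icc 1 k, ∑ i ∈ Finset.Icc (m + 1) (m + j'), e i ω‖ ^ 2 ∂μ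
      = ((k : ℝ) ^ 2 - 1) * (2 * (n : ℝ) - (k : ℝ)) / (12 * (k : ℝ) * ((n : ℝ) - 1)) := by
  have hnR : (2:ℝ) ≤ (n:ℝ) := by exact_mod_cast hn
  have hn1 : ((n:ℝ) - 1) ≠ 0 := by linarith
  have hkR : ((k:ℝ)) ≠ 0 := Nat.cast_ne_zero.mpr (by omega)
  have hsub : ∀ j ∈ Finset.Icc 1 k, Finset.Icc (m+1) (m+j) ⊆ Finset.Icc 1 n := by
    intro j hj i hi
    simp only [Finset.mem_Icc] at *
    omega
  -- integrability of pairwise segment inner products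
  have hG : ∀ j ∈ Finset.Icc 1 k, ∀ j' ∈ Finset.Icc 1 k,
      Integrable (fun ω => ⟪∑ i ∈ Finset.Icc (m+1) (m+j), e i ω,
        ∑ i' ∈ Finset.Icc (m+1) (m+j'), e i' ω⟫_ℝ) μ := by
    intro j hj j' hj'
    have heq : (fun ω => ⟪∑ i ∈ Finset.Icc (m+1) (m+j), e i ω,
        ∑ i' ∈ Finset.Icc (m+1) (m+j'), e i' ω⟫_ℝ)
        = fun ω => ∑ i ∈ Finset.Icc (m+1) (m+j), ∑ i' ∈ Finset.Icc (m+1) (m+j'),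
            ⟪e i ω, e i' ω⟫_ℝ := by
      funext ω; rw [sum_inner]
      exact Finset.sum_congr rfl fun i _ => inner_sum _ _ _
    rw [heq]
    exact integrable_finset_sum _ fun i hi => integrable_finset_sum _ fun i' hi' =>
      hint i (hsub j hj hi) i' (hsub j' hj' hi')
  -- value of each pairwise integral
  have hEX : ∀ i ∈ Finset.Icc 1 n, ∀ i' ∈ Finset.Icc 1 n,
      ∫ ω, ⟪e i ω, e i' ω⟫_ℝ ∂μ = if i = i' then (1:ℝ) else -1/((n:ℝ)-1) := by
    intro i hi i' hi'
    by_cases h : i = i'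
    · subst h
      have : (fun ω => ⟪e i ω, e i ω⟫_ℝ) = fun _ => (1:ℝ) := by
        funext ω
        rw [real_inner_self_eq_norm_sq, hunit i hi ω]; norm_num
      rw [this, integral_const]; simp
    · rw [hexp i hi i' hi' h]; simp [h]
  have hGval : ∀ j ∈ Finset.Icc 1 k, ∀ j' ∈ Finset.Icc 1 k,
      ∫ ω, ⟪∑ i ∈ Finset.Icc (m+1) (m+j), e i ω,
        ∑ i' ∈ Finset.Icc (m+1) (m+j'), e i' ω⟫_ℝ ∂μ
      = ((min j j' : ℕ) : ℝ) * ((n:ℝ)/((n:ℝ)-1)) - (j:ℝ)*(j':ℝ)*(1/((n:ℝ)-1)) := by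
    intro j hj j' hj'
    have heq : (fun ω => ⟪∑ i ∈ Finset.Icc (m+1) (m+j), e i ω,
        ∑ i' ∈ Finset.Icc (m+1) (m+j'), e i' ω⟫_ℝ)
        = fun ω => ∑ i ∈ Finset.Icc (m+1) (m+j), ∑ i' ∈ Finset.Icc (m+1) (m+j'),
            ⟪e i ω, e i' ω⟫_ℝ := by
      funext ω; rw [sum_inner]
      exact Finset.sum_congr rfl fun i _ => inner_sum _ _ _
    rw [heq, integral_finset_sum _ (fun i hi => integrable_finset_sum _ fun i' hi' =>
      hint i (hsub j hj hi) i' (hsub j' hj' hi'))]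
    have step1 : ∀ i ∈ Finset.Icc (m+1) (m+j),
        ∫ ω, ∑ i' ∈ Finset.Icc (m+1) (m+j'), ⟪e i ω, e i' ω⟫_ℝ ∂μ
          = ∑ i' ∈ Finset.Icc (m+1) (m+j'), (if i = i' then (1:ℝ) else -1/((n:ℝ)-1)) := by
      intro i hi
      rw [integral_finset_sum _ (fun i' hi' => hint i (hsub j hj hi) i' (hsub j' hj' hi'))]
      exact Finset.sum_congr rfl fun i' hi' => hEX i (hsub j hj hi) i' (hsub j' hj' hi')
    rw [Finset.sum_congr rfl step1]
    have hsplit : ∀ i i' : ℕ, (if i = i' then (1:ℝ) else -1/((n:ℝ)-1))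
        = ((n:ℝ)/((n:ℝ)-1)) * (if i = i' then (1:ℝ) else 0) + (-1/((n:ℝ)-1)) := by
      intro i i'
      by_cases h : i = i' <;> simp [h] <;> field_simp <;> ring
    have count : ∑ i ∈ Finset.Icc (m+1) (m+j), ∑ i' ∈ Finset.Icc (m+1) (m+j'),
        (if i = i' then (1:ℝ) else 0) = ((min j j' : ℕ) : ℝ) := by
      have hinter : Finset.Icc (m+1) (m+j) ∩ Finset.Icc (m+1) (m+j')
          = Finset.Icc (m+1) (m + min j j') := by
        ext x; simp only [Finset.mem_inter, Finset.mem_Icc]; omega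
      simp only [Finset.sum_ite_eq, Finset.sum_ite_mem, hinter, Finset.sum_const,
        Nat.card_Icc, nsmul_eq_mul, mul_one]
      congr 1
      omega
    rw [Finset.sum_congr rfl (fun i _ => Finset.sum_congr rfl fun i' _ => hsplit i i')]
    simp only [Finset.sum_add_distrib, ← Finset.mul_sum, Finset.sum_const,
      Nat.card_Icc, nsmul_eq_mul]
    rw [count]
    have c1 : (m + j + 1 - (m+1) : ℕ) = j := by omega
    have c2 : (m + j' + 1 - (m+1) : ℕ) = j' := by omega
    rw [c1, c2]
    ring
  -- pointwise expansion of the integrand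
  have hpt := funext fun ω => gyration_expand k hk
    (fun j => ∑ i ∈ Finset.Icc (m + 1) (m + j), e i ω)
  rw [hpt]
  have hIntA : Integrable (fun ω => (1/(k:ℝ)) * ∑ j ∈ Finset.Icc 1 k,
      ⟪∑ i ∈ Finset.Icc (m+1) (m+j), e i ω, ∑ i ∈ Finset.Icc (m+1) (m+j), e i ω⟫_ℝ) μ :=
    (integrable_finset_sum _ fun j hj => hG j hj j hj).const_mul _
  have hIntB : Integrable (fun ω => (1/(k:ℝ)^2) * ∑ j ∈ Finset.Icc 1 k, ∑ j' ∈ Finset.Icc 1 k,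
      ⟪∑ i ∈ Finset.Icc (m+1) (m+j), e i ω, ∑ i' ∈ Finset.Icc (m+1) (m+j'), e i' ω⟫_ℝ) μ :=
    (integrable_finset_sum _ fun j hj =>
      integrable_finset_sum _ fun j' hj' => hG j hj j' hj').const_mul _
  rw [integral_sub hIntA hIntB, integral_const_mul, integral_const_mul,
    integral_finset_sum _ (fun j hj => hG j hj j hj),
    integral_finset_sum _ (fun j hj =>
      integrable_finset_sum _ fun j' hj' => hG j hj j' hj')]
  have hinner : ∀ j ∈ Finset.Icc 1 k,
      ∫ ω, ∑ j' ∈ Finset.Icc 1 k, ⟪∑ i ∈ Finset.Icc (m+1) (m+j), e i ω,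
        ∑ i' ∈ Finset.Icc (m+1) (m+j'), e i' ω⟫_ℝ ∂μ
      = ∑ j' ∈ Finset.Icc 1 k,
          (((min j j' : ℕ) : ℝ) * ((n:ℝ)/((n:ℝ)-1)) - (j:ℝ)*(j':ℝ)*(1/((n:ℝ)-1))) := by
    intro j hj
    rw [integral_finset_sum _ (fun j' hj' => hG j hj j' hj')]
    exact Finset.sum_congr rfl fun j' hj' => hGval j hj j' hj'
  rw [Finset.sum_congr rfl hinner,
    Finset.sum_congr rfl (fun j hj => (hGval j hj j hj).trans (by rw [min_self]))]
  -- evaluate the two sums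
  have sum1 : ∑ j ∈ Finset.Icc 1 k,
      ((j:ℝ) * ((n:ℝ)/((n:ℝ)-1)) - (j:ℝ)*(j:ℝ)*(1/((n:ℝ)-1)))
      = ((k:ℝ)*(k+1)/2) * ((n:ℝ)/((n:ℝ)-1))
        - ((k:ℝ)*(k+1)*(2*k+1)/6) * (1/((n:ℝ)-1)) := by
    rw [← sum_Icc_id' k, ← sum_Icc_sq' k, Finset.sum_mul, Finset.sum_mul,
      ← Finset.sum_sub_distrib]
    exact Finset.sum_congr rfl fun j _ => by ring
  have sum2 : ∑ j ∈ Finset.Icc 1 k, ∑ j' ∈ Finset.Icc 1 k,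
      (((min j j' : ℕ) : ℝ) * ((n:ℝ)/((n:ℝ)-1)) - (j:ℝ)*(j':ℝ)*(1/((n:ℝ)-1)))
      = ((k:ℝ)*(k+1)*(2*k+1)/6) * ((n:ℝ)/((n:ℝ)-1))
        - (((k:ℝ)*(k+1)/2) * ((k:ℝ)*(k+1)/2)) * (1/((n:ℝ)-1)) := by
    rw [← sum_Icc_min' k]
    rw [show ((k:ℝ)*(k+1)/2) * ((k:ℝ)*(k+1)/2)
        = (∑ j ∈ Finset.Icc 1 k, (j:ℝ)) * (∑ j' ∈ Finset.Icc 1 k, (j':ℝ)) by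
      rw [sum_Icc_id']]
    rw [Finset.sum_mul_sum, Finset.sum_mul, Finset.sum_mul, ← Finset.sum_sub_distrib]
    refine Finset.sum_congr rfl fun j _ => ?_
    rw [Finset.sum_mul, Finset.sum_mul, ← Finset.sum_sub_distrib]
  rw [sum1, sum2]
  field_simp
  ring
end
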